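/- Let α ∈ (0, 1/2) and set c₂ = 1/(2(1-α)²). Then for all real u, v with α ≤ u ≤ 1-α and α ≤ v ≤ 1-α, we have log(u/v) ≤ (u-v)/v - c₂·(u-v)². -/

import Mathlib

open Set

private lemma hasDerivAt_aux1 (t : ℝ) (ht : t ≠ 0) :
    HasDerivAt (fun t : ℝ => 2*t - t^2/2 - 3/2 - Real.log t)
      (2 - t - t⁻¹) t := by
  have h1 : HasDerivAt (fun t : ℝ => 2*t) 2 t := by
    simpa using (hasDerivAt_id t).const_mul 2
  have h2 : HasDerivAt (fun t : ℝ => t^2/2) t t := by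
    have := (hasDerivAt_pow 2 t).div_const 2
    simpa using this
  have h3 : HasDerivAt Real.log t⁻¹ t := Real.hasDerivAt_log ht
  exact ((h1.sub h2).sub_const (3/2)).sub h3

private lemma log_upper_le_one (t : ℝ) (ht0 : 0 < t) (ht1 : t ≤ 1) :
    Real.log t ≤ 2*t - t^2/2 - 3/2 := by
  set f : ℝ → ℝ := fun t => 2*t - t^2/2 - 3/2 - Real.log t with hf
  have hanti : AntitoneOn f (Ioc (0:ℝ) 1) := by
    apply antitoneOn_of_deriv_nonpos (convex_Ioc 0 1)
    · apply ContinuousOn.sub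
      · fun_prop
      · exact Real.continuousOn_log.mono (fun x hx => ne_of_gt hx.1)
    · intro x hx
      rw [interior_Ioc] at hx
      exact (hasDerivAt_aux1 x (ne_of_gt hx.1)).differentiableAt.differentiableWithinAt
    · intro x hx
      rw [interior_Ioc] at hx
      rw [(hasDerivAt_aux1 x (ne_of_gt hx.1)).deriv]
      have hx0 : 0 < x := hx.1
      have hx1 : x < 1 := hx.2
      have hinv : x⁻¹ * x = 1 := inv_mul_cancel₀ (ne_of_gt hx0)
      nlinarith [sq_nonneg (x - 1)]
  have h1 : f 1 ≤ f t := hanti ⟨ht0, ht1⟩ ⟨one_pos, le_refl 1⟩ ht1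
  have : f 1 = 0 := by norm_num [hf, Real.log_one]
  simp only [hf] at h1 this
  linarith

private lemma hasDerivAt_aux2 (t : ℝ) (ht : t ≠ 0) :
    HasDerivAt (fun t : ℝ => t/2 - 1/(2*t) - Real.log t)
      (1/2 + 1/(2*t^2) - t⁻¹) t := by
  have h1 : HasDerivAt (fun t : ℝ => t/2) (1/2) t := (hasDerivAt_id t).div_const 2
  have h2 : HasDerivAt (fun t : ℝ => 1/(2*t)) (-(2)/(2*t)^2) t := by
    have hne : 2*t ≠ 0 := by simpa using ht
    have := ((hasDerivAt_id t).const_mul 2).inv hne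
    have e : (fun t : ℝ => 1/(2*t)) = (fun y => 2 * id y)⁻¹ := by funext y; simp
    rw [e]; exact this.congr_deriv (by simp)
  have h3 : HasDerivAt Real.log t⁻¹ t := Real.hasDerivAt_log ht
  have := (h1.sub h2).sub h3
  refine this.congr_deriv ?_
  field_simp
  ring

private lemma log_upper_ge_one (t : ℝ) (ht : 1 ≤ t) :
    Real.log t ≤ t/2 - 1/(2*t) := by
  set f : ℝ → ℝ := fun t => t/2 - 1/(2*t) - Real.log t with hf
  have hmono : MonotoneOn f (Ici (1:ℝ)) := by
    apply monotoneOn_of_deriv_nonneg (convex_Ici 1)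
    · apply ContinuousOn.sub
      · apply ContinuousOn.sub
        · fun_prop
        · apply ContinuousOn.div continuousOn_const (by fun_prop)
          intro x hx
          have h1x : (1:ℝ) ≤ x := hx
          positivity
      · exact Real.continuousOn_log.mono
          (fun x hx => ne_of_gt (lt_of_lt_of_le one_pos hx))
    · intro x hx
      rw [interior_Ici] at hx
      have hx0 : (0:ℝ) < x := lt_trans one_pos hx
      exact (hasDerivAt_aux2 x (ne_of_gt hx0)).differentiableAt.differentiableWithinAt
    · intro x hx
      rw [interior_Ici] at hx
      have hx0 : (0:ℝ) < x := lt_trans one_pos hx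
      rw [(hasDerivAt_aux2 x (ne_of_gt hx0)).deriv]
      have h : 1/2 + 1/(2*x^2) - x⁻¹ = (x-1)^2/(2*x^2) := by
        field_simp
        ring
      rw [h]
      positivity
  have h1 : f 1 ≤ f t := hmono (by simp) (by simpa using ht) ht
  have : f 1 = 0 := by norm_num [hf, Real.log_one]
  simp only [hf] at h1 this
  linarith

theorem log_ratio_bound (α : ℝ) (hα0 : 0 < α) (hα : α < 1/2) (u v : ℝ)
    (hu1 : α ≤ u) (hu2 : u ≤ 1 - α) (hv1 : α ≤ v) (hv2 : v ≤ 1 - α) :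
    Real.log (u / v) ≤ (u - v) / v - (1 / (2 * (1 - α)^2)) * (u - v)^2 := by
  have hu0 : 0 < u := lt_of_lt_of_le hα0 hu1
  have hv0 : 0 < v := lt_of_lt_of_le hα0 hv1
  have ha1 : 0 < 1 - α := by linarith
  rcases le_or_gt u v with h | h
  · -- u ≤ v
    have ht0 : 0 < u / v := div_pos hu0 hv0
    have ht1 : u / v ≤ 1 := (div_le_one hv0).mpr h
    have key := log_upper_le_one (u/v) ht0 ht1
    have key2 : 2*(u/v) - (u/v)^2/2 - 3/2 = (u-v)/v - (u-v)^2/(2*v^2) := by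
      field_simp
      ring
    rw [key2] at key
    have hq : (u-v)^2/(2*(1-α)^2) ≤ (u-v)^2/(2*v^2) := by
      apply div_le_div_of_nonneg_left (sq_nonneg _) (by positivity)
      nlinarith
    have he : (1 / (2 * (1 - α)^2)) * (u - v)^2 = (u-v)^2/(2*(1-α)^2) := by ring
    linarith
  · -- v < u
    have ht1 : 1 ≤ u / v := (one_le_div hv0).mpr (le_of_lt h)
    have key := log_upper_ge_one (u/v) ht1
    have key2 : (u/v)/2 - 1/(2*(u/v)) = (u-v)/v - (u-v)^2/(2*(u*v)) := by
      field_simp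
      ring
    rw [key2] at key
    have hq : (u-v)^2/(2*(1-α)^2) ≤ (u-v)^2/(2*(u*v)) := by
      apply div_le_div_of_nonneg_left (sq_nonneg _) (by positivity)
      nlinarith
    have he : (1 / (2 * (1 - α)^2)) * (u - v)^2 = (u-v)^2/(2*(1-α)^2) := by ring
    linarith
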